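/- arXiv:2306.12839 — 2 statements merged into one kernel-verified Lean document; each statement's English description precedes it below -/
import Mathlib

section
/- Let X and Y be Banach spaces, let T : X → Y be a bounded linear operator and let λ > 0. Let (R_n) be a sequence of bounded linear operators on Y such that ‖R_n‖ ≤ λ for all n and such that R_n y → 0 in Y for every y ∈ Y. Then the essential norm of T satisfies ‖T‖_e ≥ (1/λ) · limsup_n ‖R_n ∘ T‖. -/
open Filter

/-- The essential norm of a bounded linear operator: its distance to the compact operators. -/
noncomputable def essNorm {𝕜 X Y : Type*} [NontriviallyNormedField 𝕜]
    [NormedAddCommGroup X] [NormedSpace 𝕜 X] [NormedAddCommGroup Y] [NormedSpace 𝕜 Y]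
    (T : X →L[𝕜] Y) : ℝ :=
  sInf ((fun K : X →L[𝕜] Y => ‖T - K‖) '' {K | IsCompactOperator ⇑K})

/-- If `Rₙ` are equibounded and tend to zero pointwise, and `K` is compact, then
`‖Rₙ ∘ K‖ → 0`. -/
theorem norm_comp_compact_tendsto_zero {X Y : Type*} [NormedAddCommGroup X] [NormedSpace ℝ X]
    [NormedAddCommGroup Y] [NormedSpace ℝ Y]
    (lam : ℝ) (hlam : 0 < lam)
    (R : ℕ → Y →L[ℝ] Y) (hRnorm : ∀ n, ‖R n‖ ≤ lam)
    (hRzero : ∀ y : Y, Tendsto (fun n => R n y) atTop (nhds 0))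
    (K : X →L[ℝ] Y) (hK : IsCompactOperator ⇑K) :
    Tendsto (fun n => ‖(R n).comp K‖) atTop (nhds 0) := by
  rw [Metric.tendsto_atTop]
  intro ε hε
  set δ : ℝ := ε / (4 * lam) with hδdef
  have hδ : 0 < δ := div_pos hε (by linarith)
  -- compact closure of the image of the closed unit ball
  have hM : IsCompact (closure (⇑K '' Metric.closedBall 0 1)) :=
    IsCompactOperator.isCompact_closure_image_closedBall (𝕜₁ := ℝ)
      (f := (K : X →ₗ[ℝ] Y)) hK 1
  obtain ⟨t, htfin, htcov⟩ := (Metric.totallyBounded_iff.mp hM.totallyBounded) δ hδ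
  -- eventually all net points are small
  have hev : ∀ᶠ n in atTop, ∀ y ∈ t, ‖R n y‖ < ε / 4 := by
    rw [eventually_all_finite htfin]
    intro y _
    have := (hRzero y).norm
    rw [show ‖(0 : Y)‖ = 0 by simp] at this
    have := this.eventually_lt_const (by linarith : (0:ℝ) < ε / 4)
    exact this
  obtain ⟨N, hN⟩ := eventually_atTop.mp hev
  refine ⟨N, fun n hn => ?_⟩
  have hbound : ‖(R n).comp K‖ ≤ ε / 2 := by
    refine ContinuousLinearMap.opNorm_le_bound _ (by linarith) fun x => ?_
    rcases eq_or_ne x 0 with rfl | hx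
    · simp
    · have hxn : (0:ℝ) < ‖x‖ := norm_pos_iff.mpr hx
      set u := ‖x‖⁻¹ • x with hu
      have hu1 : ‖u‖ ≤ 1 := by
        rw [hu, norm_smul, norm_inv, norm_norm, inv_mul_cancel₀ hxn.ne']
      have hKu : K u ∈ closure (⇑K '' Metric.closedBall 0 1) :=
        subset_closure ⟨u, by simpa [Metric.mem_closedBall, dist_zero_right] using hu1, rfl⟩
      obtain ⟨y, hyt, hyb⟩ := Set.mem_iUnion₂.mp (htcov hKu)
      have hdist : ‖K u - y‖ < δ := by
        rw [← dist_eq_norm]; exact hyb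
      have h1 : ‖R n (K u)‖ ≤ ε / 2 := by
        have : R n (K u) = R n (K u - y) + R n y := by
          rw [← map_add, sub_add_cancel]
        rw [this]
        have hA : ‖R n (K u - y)‖ ≤ lam * δ := by
          calc ‖R n (K u - y)‖ ≤ ‖R n‖ * ‖K u - y‖ := (R n).le_opNorm _
            _ ≤ lam * δ := by
              apply mul_le_mul (hRnorm n) hdist.le (norm_nonneg _)
                hlam.le
        have hlamδ : lam * δ = ε / 4 := by
          rw [hδdef]; field_simp
        calc ‖R n (K u - y) + R n y‖ ≤ ‖R n (K u - y)‖ + ‖R n y‖ := norm_add_le _ _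
          _ ≤ lam * δ + ε / 4 := add_le_add hA (hN n hn y hyt).le
          _ = ε / 2 := by rw [hlamδ]; ring
      have hxu : x = ‖x‖ • u := by
        rw [hu, smul_smul, mul_inv_cancel₀ hxn.ne', one_smul]
      calc ‖((R n).comp K) x‖ = ‖R n (K x)‖ := rfl
        _ = ‖x‖ * ‖R n (K u)‖ := by
          conv_lhs => rw [hxu]
          rw [map_smul, map_smul, norm_smul, norm_norm]
        _ ≤ ‖x‖ * (ε / 2) := by
          exact mul_le_mul_of_nonneg_left h1 (norm_nonneg _)
        _ = ε / 2 * ‖x‖ := by ring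
  rw [Real.dist_eq, sub_zero, abs_of_nonneg (norm_nonneg _)]
  linarith

/-- If `X, Y` are Banach spaces, `T : X → Y` is bounded linear, `λ > 0`, and `(Rₙ)` is a
sequence of bounded operators on `Y` with `‖Rₙ‖ ≤ λ` converging pointwise to `0`, then
`‖T‖ₑ ≥ (1/λ) · limsupₙ ‖Rₙ ∘ T‖`. -/
theorem essNorm_ge_limsup_comp {X Y : Type*} [NormedAddCommGroup X] [NormedSpace ℝ X]
    [CompleteSpace X] [NormedAddCommGroup Y] [NormedSpace ℝ Y] [CompleteSpace Y]
    (T : X →L[ℝ] Y) (lam : ℝ) (hlam : 0 < lam)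
    (R : ℕ → Y →L[ℝ] Y) (hRnorm : ∀ n, ‖R n‖ ≤ lam)
    (hRzero : ∀ y : Y, Tendsto (fun n => R n y) atTop (nhds 0)) :
    (1 / lam) * limsup (fun n => ‖(R n).comp T‖) atTop ≤ essNorm T := by
  refine le_csInf ⟨‖T - 0‖, 0, isCompactOperator_zero, rfl⟩ ?_
  rintro b ⟨K, hK, rfl⟩
  simp only [Set.mem_setOf_eq] at hK
  rw [one_div, inv_mul_le_iff₀ hlam]
  -- limsup f ≤ lam * ‖T - K‖
  have hg := norm_comp_compact_tendsto_zero lam hlam R hRnorm hRzero K hK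
  have hub : ∀ n, ‖(R n).comp T‖ ≤ lam * ‖T - K‖ + ‖(R n).comp K‖ := by
    intro n
    have hsplit : (R n).comp T = (R n).comp (T - K) + (R n).comp K := by
      ext x; simp
    rw [hsplit]
    calc ‖(R n).comp (T - K) + (R n).comp K‖
        ≤ ‖(R n).comp (T - K)‖ + ‖(R n).comp K‖ := norm_add_le _ _
      _ ≤ lam * ‖T - K‖ + ‖(R n).comp K‖ := by
        gcongr
        calc ‖(R n).comp (T - K)‖ ≤ ‖R n‖ * ‖T - K‖ := ContinuousLinearMap.opNorm_comp_le _ _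
          _ ≤ lam * ‖T - K‖ := mul_le_mul_of_nonneg_right (hRnorm n) (norm_nonneg _)
  have htend : Tendsto (fun n => lam * ‖T - K‖ + ‖(R n).comp K‖) atTop
      (nhds (lam * ‖T - K‖)) := by
    simpa using (tendsto_const_nhds (x := lam * ‖T - K‖)).add hg
  calc limsup (fun n => ‖(R n).comp T‖) atTop
      ≤ limsup (fun n => lam * ‖T - K‖ + ‖(R n).comp K‖) atTop := by
        refine limsup_le_limsup (Eventually.of_forall hub) ?_ ?_
        · exact isCoboundedUnder_le_of_le atTop fun n => norm_nonneg _
        · exact htend.isBoundedUnder_le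
    _ = lam * ‖T - K‖ := htend.limsup_eq
end

section
/- Let (Ω₁, 𝒜, μ) and (Ω₂, ℬ, ν) be σ-finite measure spaces, let u : Ω₂ → ℂ be measurable and let φ : Ω₂ → Ω₁ be measurable and nonsingular (the pushforward of ν under φ is absolutely continuous with respect to μ). Fix q ≥ 1, define the measure μ_q on 𝒜 by μ_q(A) = ∫_{φ^{-1}(A)} |u|^q dν, and let F = (dμ_q/dμ)^{1/q} be the q-th root of its Radon–Nikodym derivative with respect to μ. Then for every f ∈ L^p(μ) one has ∫_{Ω₂} |u|^q |f ∘ φ|^q dν = ∫_{Ω₁} F^q |f|^q dμ, i.e. ‖u·(f∘φ)‖_{L^q(ν)} = ‖F f‖_{L^q(μ)}. -/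
open MeasureTheory ENNReal

/-- Change of variables for weighted composition operators: with
`μ_q(A) = ∫_{φ⁻¹(A)} |u|^q dν` and `F = (dμ_q/dμ)^{1/q}`, for every `f ∈ L^p(μ)` one has
`∫ |u|^q |f ∘ φ|^q dν = ∫ F^q |f|^q dμ`. -/
theorem weightedComposition_change_of_variables {Ω₁ Ω₂ : Type*}
    [MeasurableSpace Ω₁] [MeasurableSpace Ω₂]
    (μ : Measure Ω₁) (ν : Measure Ω₂) [SigmaFinite μ] [SigmaFinite ν]
    (u : Ω₂ → ℂ) (hu : Measurable u)
    (φ : Ω₂ → Ω₁) (hφ : Measurable φ) (hns : Measure.map φ ν ≪ μ)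
    (q : ℝ) (hq : 1 ≤ q) (p : ℝ) [Fact ((1:ℝ≥0∞) ≤ ENNReal.ofReal p)] (hp : 1 ≤ p)
    (f : Lp ℂ (ENNReal.ofReal p) μ) :
    ∫⁻ x, (‖u x‖₊ : ℝ≥0∞) ^ q * (‖(f : Ω₁ → ℂ) (φ x)‖₊ : ℝ≥0∞) ^ q ∂ν
      = ∫⁻ y,
          (((Measure.map φ (ν.withDensity fun x => (‖u x‖₊ : ℝ≥0∞) ^ q)).rnDeriv μ y) ^ (1/q)) ^ q
            * (‖(f : Ω₁ → ℂ) y‖₊ : ℝ≥0∞) ^ q ∂μ := by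
  have hq0 : q ≠ 0 := by linarith
  set w : Ω₂ → ℝ≥0∞ := fun x => (‖u x‖₊ : ℝ≥0∞) ^ q with hw
  have hwmeas : Measurable w := (hu.nnnorm.coe_nnreal_ennreal).pow_const q
  have hwfin : ∀ x, w x ≠ ∞ := fun x =>
    ENNReal.rpow_ne_top_of_nonneg (by linarith) (by simp)
  have : SigmaFinite (ν.withDensity w) := SigmaFinite.withDensity_of_ne_top' hwfin
  set μq : Measure Ω₁ := Measure.map φ (ν.withDensity w) with hμq
  have : SFinite μq := by rw [hμq]; infer_instance
  have hac : μq ≪ μ := by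
    refine Measure.AbsolutelyContinuous.trans ?_ hns
    exact Measure.AbsolutelyContinuous.map (withDensity_absolutelyContinuous ν w) hφ
  have hg : AEMeasurable (fun y => (‖(f : Ω₁ → ℂ) y‖₊ : ℝ≥0∞) ^ q) μ :=
    ((Lp.aestronglyMeasurable f).aemeasurable.nnnorm.coe_nnreal_ennreal).pow_const q
  have hsimp : ∀ y, ((μq.rnDeriv μ y) ^ (1/q)) ^ q = μq.rnDeriv μ y := by
    intro y
    rw [← ENNReal.rpow_mul, one_div, inv_mul_cancel₀ hq0, ENNReal.rpow_one]
  calc ∫⁻ x, w x * (‖(f : Ω₁ → ℂ) (φ x)‖₊ : ℝ≥0∞) ^ q ∂ν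
      = ∫⁻ x, (‖(f : Ω₁ → ℂ) (φ x)‖₊ : ℝ≥0∞) ^ q ∂(ν.withDensity w) := by
        rw [lintegral_withDensity_eq_lintegral_mul₀' hwmeas.aemeasurable
          (((hg.mono_ac hac).comp_aemeasurable' hφ.aemeasurable))]
        rfl
    _ = ∫⁻ y, (‖(f : Ω₁ → ℂ) y‖₊ : ℝ≥0∞) ^ q ∂μq := by
        rw [hμq, lintegral_map' (hg.mono_ac hac) hφ.aemeasurable]
    _ = ∫⁻ y, μq.rnDeriv μ y * (‖(f : Ω₁ → ℂ) y‖₊ : ℝ≥0∞) ^ q ∂μ := by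
        rw [MeasureTheory.lintegral_rnDeriv_mul hac hg]
    _ = _ := by simp_rw [hsimp]
end
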